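/- Let V be a real vector space and n ≥ 3 an integer. Let α₁, α₂ : V → ℝ be linear functionals and v₁, v₂ ∈ V with α₁(v₁) = α₂(v₂) = 2, α₁(v₂) < 0, α₂(v₁) < 0, and α₁(v₂)·α₂(v₁) = 4·cos²(π/n). Let R₁ and R₂ be the projective reflections associated with (α₁, v₁) and (α₂, v₂). Then the composition R₁ ∘ R₂ has order exactly n: (R₁ ∘ R₂)^n = id_V, and (R₁ ∘ R₂)^k ≠ id_V for every integer 1 ≤ k < n. -/

import Mathlib

/-- If two projective reflections `R₁, R₂` satisfy Vinberg's dihedral-angle condition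
`α₁(v₂) * α₂(v₁) = 4 cos²(π/n)` with both `α₁(v₂), α₂(v₁)` negative, then `R₁ ∘ R₂` has
order exactly `n`. -/
theorem stmt_5 {V : Type*} [AddCommGroup V] [Module ℝ V]
    (n : ℕ) (hn : 3 ≤ n)
    (α₁ α₂ : Module.Dual ℝ V) (v₁ v₂ : V)
    (h1 : α₁ v₁ = 2) (h2 : α₂ v₂ = 2)
    (h12 : α₁ v₂ < 0) (h21 : α₂ v₁ < 0)
    (hμ : α₁ v₂ * α₂ v₁ = 4 * Real.cos (Real.pi / n) ^ 2)
    (R₁ R₂ : V →ₗ[ℝ] V)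
    (hR₁ : ∀ x, R₁ x = x - α₁ x • v₁) (hR₂ : ∀ x, R₂ x = x - α₂ x • v₂) :
    (R₁ ∘ₗ R₂) ^ n = LinearMap.id ∧
      ∀ k : ℕ, 1 ≤ k → k < n → (R₁ ∘ₗ R₂) ^ k ≠ LinearMap.id := by
  set a := α₁ v₂ with ha
  set b := α₂ v₁ with hb
  have hnR : (3:ℝ) ≤ (n:ℝ) := by exact_mod_cast hn
  have hn0 : (0:ℝ) < (n:ℝ) := by linarith
  set θ : ℝ := 2 * Real.pi / n with hθdef
  have hπ := Real.pi_pos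
  have hθpos : 0 < θ := by rw [hθdef]; positivity
  have hθlt : θ < Real.pi := by
    rw [hθdef, div_lt_iff₀ hn0]
    nlinarith
  have hsin : 0 < Real.sin θ := Real.sin_pos_of_pos_of_lt_pi hθpos hθlt
  have hsinne : Real.sin θ ≠ 0 := ne_of_gt hsin
  have hcosθ : Real.cos θ = 2 * Real.cos (Real.pi / n) ^ 2 - 1 := by
    have e : θ = 2 * (Real.pi / n) := by rw [hθdef]; ring
    rw [e, Real.cos_two_mul]
  have hab : a * b = 2 + 2 * Real.cos θ := by rw [hμ, hcosθ]; ring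
  have hcoslt : Real.cos θ < 1 := by
    nlinarith [Real.sin_sq_add_cos_sq θ]
  have hΔpos : (0:ℝ) < 4 - a * b := by rw [hab]; linarith
  have hΔne : (4:ℝ) - a * b ≠ 0 := ne_of_gt hΔpos
  set q : ℕ → ℝ := fun k => Real.sin (k * θ) / Real.sin θ with hq
  set r : ℕ → ℝ := fun k =>
      (Real.sin (k * θ) - Real.sin (((k:ℝ) - 1) * θ) - Real.sin θ) /
        ((4 - a * b) * Real.sin θ) with hr
  have hq0 : q 0 = 0 := by simp [hq]
  have hr0 : r 0 = 0 := by
    have e : (((0:ℕ):ℝ) - 1) * θ = -θ := by push_cast; ring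
    simp [hr, e, Real.sin_neg]
  have hrstep : ∀ k : ℕ, r (k + 1) = r k - q k := by
    intro k
    have e1 : (((k + 1 : ℕ)):ℝ) * θ = (k:ℝ) * θ + θ := by push_cast; ring
    have e2 : ((((k + 1:ℕ)):ℝ) - 1) * θ = (k:ℝ) * θ := by push_cast; ring
    have e3 : ((k:ℝ) - 1) * θ = (k:ℝ) * θ - θ := by ring
    have habΔ : (4:ℝ) - a * b = 2 - 2 * Real.cos θ := by rw [hab]; ring
    have h2' : (2:ℝ) - 2 * Real.cos θ ≠ 0 := by rw [← habΔ]; exact hΔne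
    simp only [hq, hr, e1, e2, e3, habΔ, Real.sin_add, Real.sin_sub]
    have h1' : (1:ℝ) - Real.cos θ ≠ 0 := ne_of_gt (by linarith)
    field_simp
    ring
  have hqstep : ∀ k : ℕ, q (k + 1) = (4 - a * b) * (r k - q k) + q k + 1 := by
    intro k
    rw [← hrstep k]
    have e2 : ((((k + 1:ℕ)):ℝ) - 1) * θ = (k:ℝ) * θ := by push_cast; ring
    simp only [hq, hr, e2]
    field_simp
    ring
  have hnθ : (n:ℝ) * θ = 2 * Real.pi := by
    rw [hθdef]
    field_simp
  have hqn : q n = 0 := by simp [hq, hnθ]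
  have hrn : r n = 0 := by
    have e2 : ((n:ℝ) - 1) * θ = 2 * Real.pi - θ := by rw [← hnθ]; ring
    have e3 : Real.sin (2 * Real.pi - θ) = - Real.sin θ := by
      rw [Real.sin_sub]; simp
    simp [hr, hnθ, e2, e3]
  have hqzero : ∀ k : ℕ, q k = 0 → Real.sin ((k:ℝ) * θ) = 0 := by
    intro k hk
    rw [hq] at hk
    simp only at hk
    exact (div_eq_zero_iff.mp hk).resolve_right hsinne
  have hrzero : ∀ k : ℕ, Real.sin ((k:ℝ) * θ) = 0 → r k = 0 →
      Real.sin (((k:ℝ) - 1) * θ) = - Real.sin θ := by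
    intro k hs hk
    rw [hr] at hk
    simp only at hk
    rcases div_eq_zero_iff.mp hk with h | h
    · linarith
    · exact absurd h (mul_ne_zero hΔne hsinne)
  clear_value q r
  clear hq hr
  set T := R₁ ∘ₗ R₂ with hT
  have hTx : ∀ x, T x = x + (a * α₂ x - α₁ x) • v₁ - α₂ x • v₂ := by
    intro x
    rw [hT, LinearMap.comp_apply, hR₂, hR₁, map_sub, map_smul, ← ha, smul_eq_mul]
    module
  have hα₁T : ∀ x, α₁ (T x) = a * α₂ x - α₁ x := by
    intro x
    rw [hTx, map_sub, map_add, map_smul, map_smul, h1, ← ha, smul_eq_mul, smul_eq_mul]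
    ring
  have hα₂T : ∀ x, α₂ (T x) = (a * b - 1) * α₂ x - b * α₁ x := by
    intro x
    rw [hTx, map_sub, map_add, map_smul, map_smul, h2, ← hb, smul_eq_mul, smul_eq_mul]
    ring
  have key : ∀ k : ℕ, ∀ x : V, (T ^ k) x = x
      + r k • ((2 * α₁ x - a * α₂ x) • v₁ + (2 * α₂ x - b * α₁ x) • v₂)
      + q k • ((a * α₂ x - α₁ x) • v₁ - α₂ x • v₂) := by
    intro k
    induction k with
    | zero =>
      intro x
      simp [hq0, hr0]
    | succ k ih =>
      intro x
      rw [pow_succ, Module.End.mul_apply, ih (T x), hα₁T, hα₂T, hTx,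
        hrstep, hqstep]
      match_scalars <;> ring
  constructor
  · apply LinearMap.ext
    intro x
    rw [key n x, hqn, hrn]
    simp
  · intro k hk1 hkn hEq
    have hv := key k v₁
    rw [hEq] at hv
    rw [h1] at hv
    simp only [LinearMap.id_apply, ← hb] at hv
    have e1 := congrArg α₁ hv
    have e2 := congrArg α₂ hv
    simp only [map_add, map_sub, map_smul, smul_eq_mul, h1, h2, ← ha, ← hb] at e1 e2
    have E1 : (4 - a * b) * (2 * r k - q k) = 0 := by linear_combination -e1
    have E2 : b * ((4 - a * b) * (r k - q k)) = 0 := by linear_combination -e2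
    have hbne : b ≠ 0 := ne_of_lt h21
    have E2' : r k - q k = 0 := by
      rcases mul_eq_zero.mp E2 with h | h
      · exact absurd h hbne
      · rcases mul_eq_zero.mp h with h' | h'
        · exact absurd h' hΔne
        · exact h'
    have E1' : 2 * r k - q k = 0 := by
      rcases mul_eq_zero.mp E1 with h | h
      · exact absurd h hΔne
      · exact h
    have hrk : r k = 0 := by linarith
    have hqk : q k = 0 := by linarith
    have hsk : Real.sin ((k:ℝ) * θ) = 0 := hqzero k hqk
    have hsk1 : Real.sin (((k:ℝ) - 1) * θ) = - Real.sin θ := hrzero k hsk hrk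
    obtain ⟨m, hm⟩ := Real.sin_eq_zero_iff.mp hsk
    have hk0 : (0:ℝ) < (k:ℝ) := by
      have : (1:ℝ) ≤ (k:ℝ) := by exact_mod_cast hk1
      linarith
    have hknR : (k:ℝ) < (n:ℝ) := by exact_mod_cast hkn
    have hkθpos : 0 < (k:ℝ) * θ := mul_pos hk0 hθpos
    have hkθlt : (k:ℝ) * θ < 2 * Real.pi := by
      calc (k:ℝ) * θ < (n:ℝ) * θ := by
            exact mul_lt_mul_of_pos_right hknR hθpos
        _ = 2 * Real.pi := hnθ
    clear hv e1 e2 E1 E2 hEq key hTx hα₁T hα₂T hrstep hqstep hqzero hrzero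
    have hm1 : m = 1 := by
      have hp0 : 0 < (m:ℝ) * Real.pi := by rw [hm]; exact hkθpos
      have hp2 : (m:ℝ) * Real.pi < 2 * Real.pi := by rw [hm]; exact hkθlt
      have hm0 : (0:ℝ) < (m:ℝ) := by
        rcases mul_pos_iff.mp hp0 with ⟨h', _⟩ | ⟨_, h'⟩
        · exact h'
        · linarith
      have hm2 : (m:ℝ) < 2 := (mul_lt_mul_iff_of_pos_right hπ).mp hp2
      have hm0' : 0 < m := by exact_mod_cast hm0
      have hm2' : m < 2 := by exact_mod_cast hm2
      omega
    have hkθ : (k:ℝ) * θ = Real.pi := by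
      rw [← hm, hm1]
      simp
    have e4 : ((k:ℝ) - 1) * θ = Real.pi - θ := by rw [← hkθ]; ring
    rw [e4, Real.sin_pi_sub] at hsk1
    linarith
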